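/- Let c > 0 and define α_k = 2/(c(k+1)) for k ≥ 1. Suppose nonnegative reals e_s (errors f(x_s) − f(x*) in expectation) and a_s = E[‖x_s − x*‖²] satisfy e_s ≤ ((c(s−1))/4) a_s + M/(c(s+1)) − ((c(s+1))/4) a_{s+1} for all s ≥ 1, where M > 0. Then min_{s=1,…,k} e_s ≤ 2M/(c(k+1)). -/

import Mathlib

lemma sum_Icc_id_real (k : ℕ) :
    (∑ s ∈ Finset.Icc 1 k, (s : ℝ)) = k * (k + 1) / 2 := by
  induction k with
  | zero => simp
  | succ n ih =>
    rw [Finset.sum_Icc_succ_top (by omega), ih]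
    push_cast
    ring

/-- Telescoping/weighted-averaging argument of Theorem 1: if the errors `e s`
satisfy the one-step recursion with stepsize `α_s = 2/(c(s+1))`, then the best
error among the first `k` iterations is at most `2M/(c(k+1))`. -/
theorem weighted_telescoping_rate
    (c M : ℝ) (hc : 0 < c) (hM : 0 < M)
    (e a : ℕ → ℝ) (he : ∀ s, 0 ≤ e s) (ha : ∀ s, 0 ≤ a s)
    (hrec : ∀ s : ℕ, 1 ≤ s →
      e s ≤ c * ((s : ℝ) - 1) / 4 * a s + M / (c * ((s : ℝ) + 1))
            - c * ((s : ℝ) + 1) / 4 * a (s + 1))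
    (k : ℕ) (hk : 1 ≤ k) :
    ∃ s, 1 ≤ s ∧ s ≤ k ∧ e s ≤ 2 * M / (c * ((k : ℝ) + 1)) := by
  have hMc0 : 0 ≤ M / c := div_nonneg hM.le hc.le
  -- main weighted telescoping estimate
  have key : ∀ n : ℕ, 1 ≤ n →
      (∑ s ∈ Finset.Icc 1 n, (s : ℝ) * e s)
        + c * n * (n + 1) / 4 * a (n + 1) ≤ n * M / c := by
    intro n hn
    induction n with
    | zero => omega
    | succ m ih =>
      rcases Nat.eq_or_lt_of_le hn with h1 | h1
      · -- base case m+1 = 1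
        have hm : m = 0 := by omega
        subst hm
        have h := hrec 1 le_rfl
        push_cast at h ⊢
        rw [show Finset.Icc 1 1 = {1} from rfl]
        simp only [Finset.sum_singleton, Nat.cast_one]
        have hMc : M / (c * (1 + 1)) = M / c / 2 := by
          rw [div_div]; ring_nf
        norm_num at h hMc ⊢
        linarith [ha 1, ha 2]
      · have hm : 1 ≤ m := by omega
        have ihm := ih hm
        have hrec' := hrec (m + 1) (by omega)
        rw [Finset.sum_Icc_succ_top (by omega : 1 ≤ m + 1)]
        push_cast at hrec' ⊢
        have hpos : (0:ℝ) < c * ((m:ℝ) + 1 + 1) := by positivity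
        have h2 : ((m:ℝ)+1) * (M / (c * ((m:ℝ)+1+1))) = M/c * (((m:ℝ)+1)/((m:ℝ)+1+1)) := by
          field_simp
        have h3 : ((m:ℝ)+1)/((m:ℝ)+1+1) ≤ 1 := by
          rw [div_le_one (by positivity)]; linarith
        have hMc : ((m:ℝ) + 1) * (M / (c * ((m:ℝ) + 1 + 1))) ≤ M / c := by
          rw [h2]; exact mul_le_of_le_one_right hMc0 h3
        have hmult : ((m:ℝ) + 1) * e (m + 1) ≤
            ((m:ℝ) + 1) * (c * ((m:ℝ) + 1 - 1) / 4 * a (m + 1) + M / (c * ((m:ℝ) + 1 + 1))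
              - c * ((m:ℝ) + 1 + 1) / 4 * a (m + 1 + 1)) :=
          mul_le_mul_of_nonneg_left hrec' (by positivity)
        rw [show ((m:ℝ)) * M / c = (m:ℝ) * (M / c) by ring] at ihm
        rw [show ((m:ℝ) + 1) * M / c = ((m:ℝ) + 1) * (M / c) by ring]
        generalize hD : M / (c * ((m:ℝ) + 1 + 1)) = D at hmult hMc
        generalize hQ : M / c = Q at ihm hMc ⊢
        linarith [ha (m + 2), ihm, hmult, hMc]
  -- pick the minimizer
  obtain ⟨m, hm, hmin⟩ := Finset.exists_min_image (Finset.Icc 1 k) e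
    ⟨1, Finset.mem_Icc.mpr ⟨le_rfl, hk⟩⟩
  rw [Finset.mem_Icc] at hm
  refine ⟨m, hm.1, hm.2, ?_⟩
  have hsum : e m * (k * (k + 1) / 2) ≤ (∑ s ∈ Finset.Icc 1 k, (s : ℝ) * e s) := by
    rw [← sum_Icc_id_real, Finset.mul_sum]
    apply Finset.sum_le_sum
    intro i hi
    rw [mul_comm]
    exact mul_le_mul_of_nonneg_left (hmin i hi) (Nat.cast_nonneg i)
  have hkey := key k hk
  have hk1 : (1:ℝ) ≤ (k:ℝ) := by exact_mod_cast hk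
  have ha' : 0 ≤ c * k * (k + 1) / 4 * a (k + 1) := by
    have := ha (k + 1); positivity
  have hfin : e m * (k * (k + 1) / 2) ≤ k * M / c := by linarith
  have hfin2 : e m * ((k:ℝ) * (k + 1) / 2) * c ≤ k * M := by
    have h4 := mul_le_mul_of_nonneg_right hfin hc.le
    rwa [div_mul_cancel₀ _ hc.ne'] at h4
  rw [le_div_iff₀ (by positivity)]
  nlinarith [hfin2, he m, hk1,
    mul_nonneg (mul_nonneg (he m) hc.le) (by linarith : (0:ℝ) ≤ (k:ℝ) + 1)]
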